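/- A function f : [a,b] → ℝ is Henstock integrable (in the ε-δ sense: there exists A such that for every ε > 0 there is a gauge δ such that every δ-fine tagged partition P satisfies |S(f,P) − A| < ε) if and only if it is Sequential Henstock integrable (there exist A and a sequence of gauges δₙ such that for every choice of δₙ-fine tagged partitions Pₙ, the Riemann sums S(f,Pₙ) converge to A). -/
import Mathlib


/-- A tagged partition of the compact interval `[a, b]`:
points `a = x 0 < x 1 < ⋯ < x n = b` with tags `t i ∈ [x i, x (i+1)]`. -/
structure TaggedPartition (a b : ℝ) where
  n : ℕ
  x : ℕ → ℝ
  t : ℕ → ℝ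
  n_pos : 0 < n
  x_zero : x 0 = a
  x_last : x n = b
  x_mono : ∀ i < n, x i < x (i + 1)
  tag_mem : ∀ i < n, x i ≤ t i ∧ t i ≤ x (i + 1)

/-- A gauge on `[a, b]` is a function positive on `[a, b]`. -/
def IsGauge (a b : ℝ) (δ : ℝ → ℝ) : Prop :=
  ∀ x ∈ Set.Icc a b, 0 < δ x

/-- A tagged partition is `δ`-fine if each subinterval has length `< δ(tag)`. -/
def IsFine (δ : ℝ → ℝ) {a b : ℝ} (P : TaggedPartition a b) : Prop :=
  ∀ i < P.n, P.x (i + 1) - P.x i < δ (P.t i)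

/-- The Riemann sum `S(f, P) = Σ f(tᵢ)(xᵢ − xᵢ₋₁)`. -/
noncomputable def riemannSum (f : ℝ → ℝ) {a b : ℝ} (P : TaggedPartition a b) : ℝ :=
  ∑ i ∈ Finset.range P.n, f (P.t i) * (P.x (i + 1) - P.x i)

/-- `f` is Henstock integrable on `[a, b]` with value `A` (ε-δ definition). -/
def HenstockIntegralTo (f : ℝ → ℝ) (a b A : ℝ) : Prop :=
  ∀ ε > 0, ∃ δ : ℝ → ℝ, IsGauge a b δ ∧
    ∀ P : TaggedPartition a b, IsFine δ P → |riemannSum f P - A| < ε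

/-- The ε-δ Henstock integral is equivalent to the Sequential Henstock integral. -/
theorem henstock_iff_sequentialHenstock (a b : ℝ) (hab : a < b) (f : ℝ → ℝ) :
    (∃ A : ℝ, HenstockIntegralTo f a b A) ↔
    (∃ A : ℝ, ∃ δ : ℕ → ℝ → ℝ, (∀ n, IsGauge a b (δ n)) ∧
      ∀ P : ℕ → TaggedPartition a b, (∀ n, IsFine (δ n) (P n)) →
        Filter.Tendsto (fun n => riemannSum f (P n)) Filter.atTop (nhds A)) := by
  constructor
  · rintro ⟨A, hA⟩
    have hpos : ∀ n : ℕ, (0:ℝ) < 1 / (n + 1) := fun n => by positivity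
    refine ⟨A, fun n => Classical.choose (hA (1/(n+1)) (hpos n)),
      fun n => (Classical.choose_spec (hA (1/(n+1)) (hpos n))).1, ?_⟩
    intro P hP
    rw [Metric.tendsto_atTop]
    intro ε hε
    obtain ⟨N, hN⟩ := exists_nat_one_div_lt hε
    refine ⟨N, fun n hn => ?_⟩
    have h1 := (Classical.choose_spec (hA (1/(n+1)) (hpos n))).2 (P n) (hP n)
    rw [Real.dist_eq]
    calc |riemannSum f (P n) - A| < 1/(n+1) := h1
      _ ≤ 1/(N+1) := by
          apply one_div_le_one_div_of_le (by positivity)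
          have : (N:ℝ) ≤ n := by exact_mod_cast hn
          linarith
      _ < ε := hN
  · rintro ⟨A, δ, hδ, hP⟩
    refine ⟨A, ?_⟩
    by_contra h
    unfold HenstockIntegralTo at h
    push_neg at h
    obtain ⟨ε, hε, hbad⟩ := h
    choose P hfine herr using fun n => hbad (δ n) (hδ n)
    have hT := hP P hfine
    rw [Metric.tendsto_atTop] at hT
    obtain ⟨N, hN⟩ := hT ε hε
    have := hN N le_rfl
    rw [Real.dist_eq] at this
    exact absurd (herr N) (not_le.mpr this)
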